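/- Let h : (-ρ,ρ)² → ℝ be a C^{10ℓ+1} function such that h(t,0) = 0 for all t and |h(t₁,t₃)| ≤ C(|t₁|^{10ℓ} + |t₃|^{10ℓ}) for all (t₁,t₃). Then for all integers i, j ≥ 0 with i + j ≤ ℓ, the partial derivatives satisfy |∂₁^i ∂₃^j h(t₁,t₃)| ≤ C'(|t₁| + |t₃|)^{ℓ+1} on the two coordinate axes {t₃ = 0} ∪ {t₁ = 0}, for some constant C' depending on C, ℓ, ρ and the C^{10ℓ+1} norm of h. -/

import Mathlib

open Set Polynomial

private lemma iterW {v : ℝ → ℝ} {Nv : ℕ} (hv : ContDiff ℝ (Nv : ℕ∞) v) {a b : ℝ}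
    (hab : a < b) {m : ℕ} (hm : m ≤ Nv) {x : ℝ} (hx : x ∈ Set.Icc a b) :
    iteratedDerivWithin m v (Set.Icc a b) x = iteratedDeriv m v x := by
  have H := (contDiff_iff_ftaylorSeries.mp hv).hasFTaylorSeriesUpToOn (Set.Icc a b)
  have := H.eq_iteratedFDerivWithin_of_uniqueDiffOn (m := m) (by exact_mod_cast hm)
    (uniqueDiffOn_Icc hab) hx
  rw [iteratedDerivWithin_eq_iteratedFDerivWithin, ← this, iteratedDeriv_eq_iteratedFDeriv]
  rfl

private lemma taylor_bound {v : ℝ → ℝ} {Nv d : ℕ} (hv : ContDiff ℝ (Nv : ℕ∞) v) (hd : 0 < d)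
    (hdN : d ≤ Nv) {y₀ r M : ℝ} (hr : 0 < r)
    (hM : ∀ s ∈ Set.Icc y₀ (y₀ + r), |iteratedDeriv d v s| ≤ M) {x : ℝ}
    (hx : x ∈ Set.Icc y₀ (y₀ + r)) :
    |v x - ∑ m ∈ Finset.range d, iteratedDeriv m v y₀ / (m.factorial : ℝ) * (x - y₀) ^ m| ≤ M * r ^ d := by
  obtain ⟨d', rfl⟩ := Nat.exists_eq_succ_of_ne_zero hd.ne'
  have hab : y₀ < y₀ + r := by linarith
  have hM0 : 0 ≤ M := le_trans (abs_nonneg _) (hM y₀ ⟨le_refl _, hab.le⟩)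
  have hcd : ContDiffOn ℝ (d' + 1 : ℕ) v (Set.Icc y₀ (y₀ + r)) :=
    (hv.of_le (by exact_mod_cast hdN)).contDiffOn
  have hC : ∀ y ∈ Set.Icc y₀ (y₀ + r),
      ‖iteratedDerivWithin (d' + 1) v (Set.Icc y₀ (y₀ + r)) y‖ ≤ M := by
    intro y hy
    rw [iterW hv hab hdN hy, Real.norm_eq_abs]
    exact hM y hy
  have hrem := taylor_mean_remainder_bound hab.le hcd hx hC
  have htay : taylorWithinEval v d' (Set.Icc y₀ (y₀ + r)) y₀ x
      = ∑ m ∈ Finset.range (d' + 1), iteratedDeriv m v y₀ / (m.factorial : ℝ) * (x - y₀) ^ m := by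
    rw [taylor_within_apply]
    refine Finset.sum_congr rfl fun k hk => ?_
    rw [iterW hv hab (le_trans (Nat.le_of_lt_succ (Finset.mem_range.mp hk)) (Nat.le_of_succ_le hdN))
      (Set.left_mem_Icc.mpr hab.le)]
    rw [smul_eq_mul]; ring
  rw [htay] at hrem
  refine le_trans hrem ?_
  have h1 : (1 : ℝ) ≤ (d'.factorial : ℝ) := by exact_mod_cast Nat.one_le_iff_ne_zero.mpr (Nat.factorial_ne_zero d')
  have hx0 : 0 ≤ x - y₀ := by linarith [hx.1]
  have hxr : x - y₀ ≤ r := by linarith [hx.2]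
  calc M * (x - y₀) ^ (d' + 1) / d'.factorial ≤ M * (x - y₀) ^ (d' + 1) / 1 := by
        apply div_le_div_of_nonneg_left ?_ one_pos h1
        · positivity
      _ = M * (x - y₀) ^ (d' + 1) := by ring
      _ ≤ M * r ^ (d' + 1) := by
        exact mul_le_mul_of_nonneg_left (pow_le_pow_left₀ hx0 hxr _) hM0


private lemma poly_coeff_bound (d : ℕ) (hd : 0 < d) :
    ∃ K, 0 < K ∧ ∀ P : Polynomial ℝ, P.degree < (d : ℕ) → ∀ A : ℝ,
      (∀ k ∈ Finset.range d, |P.eval ((k : ℝ) / d)| ≤ A) → ∀ j, |P.coeff j| ≤ K * A := by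
  set v : ℕ → ℝ := fun k => (k : ℝ) / d with hv
  have hinj : Set.InjOn v (Finset.range d) := by
    intro a _ b _ hab
    have hd' : (d : ℝ) ≠ 0 := Nat.cast_ne_zero.mpr hd.ne'
    have hab' : (a : ℝ) / d = (b : ℝ) / d := hab
    rw [div_left_inj' hd'] at hab'
    exact_mod_cast hab'
  set K : ℝ := 1 + ∑ k ∈ Finset.range d, ∑ j' ∈ Finset.range d,
      |(Lagrange.basis (Finset.range d) v k).coeff j'| with hK
  have hKpos : 0 < K := by positivity
  refine ⟨K, hKpos, ?_⟩
  intro P hdeg A hA j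
  have hA0 : 0 ≤ A := le_trans (abs_nonneg _) (hA 0 (Finset.mem_range.mpr hd))
  rcases lt_or_ge j d with hj | hj
  · have hPeq : P = Lagrange.interpolate (Finset.range d) v fun i => P.eval (v i) :=
      Lagrange.eq_interpolate hinj (by simpa using hdeg)
    have hco : P.coeff j = ∑ k ∈ Finset.range d,
        P.eval (v k) * (Lagrange.basis (Finset.range d) v k).coeff j := by
      conv_lhs => rw [hPeq]
      rw [Lagrange.interpolate_apply, Polynomial.finset_sum_coeff]
      exact Finset.sum_congr rfl fun k _ => by rw [Polynomial.coeff_C_mul]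
    rw [hco]
    calc |∑ k ∈ Finset.range d, P.eval (v k) * (Lagrange.basis (Finset.range d) v k).coeff j|
        ≤ ∑ k ∈ Finset.range d, |P.eval (v k)| * |(Lagrange.basis (Finset.range d) v k).coeff j| := by
          refine le_trans (Finset.abs_sum_le_sum_abs _ _) ?_
          exact le_of_eq (Finset.sum_congr rfl fun k _ => abs_mul _ _)
      _ ≤ ∑ k ∈ Finset.range d, A * |(Lagrange.basis (Finset.range d) v k).coeff j| := by
          refine Finset.sum_le_sum fun k hk => ?_
          exact mul_le_mul_of_nonneg_right (hA k hk) (abs_nonneg _)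
      _ = A * ∑ k ∈ Finset.range d, |(Lagrange.basis (Finset.range d) v k).coeff j| := by
          rw [Finset.mul_sum]
      _ ≤ A * K := by
          refine mul_le_mul_of_nonneg_left ?_ hA0
          rw [hK]
          have h1 : ∑ k ∈ Finset.range d, |(Lagrange.basis (Finset.range d) v k).coeff j|
              ≤ ∑ k ∈ Finset.range d, ∑ j' ∈ Finset.range d,
                |(Lagrange.basis (Finset.range d) v k).coeff j'| := by
            refine Finset.sum_le_sum fun k _ => ?_
            exact Finset.single_le_sum (f := fun j' => |(Lagrange.basis (Finset.range d) v k).coeff j'|)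
              (fun _ _ => abs_nonneg _) (Finset.mem_range.mpr hj)
          linarith
      _ = K * A := mul_comm _ _
  · rw [Polynomial.coeff_eq_zero_of_degree_lt
      (lt_of_lt_of_le hdeg (by exact_mod_cast hj))]
    simpa using mul_nonneg hKpos.le hA0

private lemma core (d : ℕ) (hd : 0 < d) :
    ∃ K, 0 < K ∧ ∀ (v : ℝ → ℝ) (Nv : ℕ), ContDiff ℝ (Nv : ℕ∞) v → d ≤ Nv →
      ∀ (y₀ r A M : ℝ), 0 < r →
        (∀ s ∈ Set.Icc (0 : ℝ) r, |v (y₀ + s)| ≤ A) →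
        (∀ s ∈ Set.Icc (0 : ℝ) r, |iteratedDeriv d v (y₀ + s)| ≤ M) →
        ∀ j, j < d → |iteratedDeriv j v y₀| ≤ K * (A + M * r ^ d) / r ^ j := by
  obtain ⟨K₀, hK₀, hP⟩ := poly_coeff_bound d hd
  refine ⟨(d.factorial : ℝ) * K₀, by positivity, ?_⟩
  intro v Nv hv hdN y₀ r A M hr hA hM j hj
  have hA0 : 0 ≤ A := le_trans (abs_nonneg _) (hA 0 ⟨le_refl _, hr.le⟩)
  have hM0 : 0 ≤ M := le_trans (abs_nonneg _) (hM 0 ⟨le_refl _, hr.le⟩)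
  set c : ℕ → ℝ := fun m => iteratedDeriv m v y₀ / (m.factorial : ℝ) with hc
  set Q : Polynomial ℝ := ∑ m ∈ Finset.range d, C (c m * r ^ m) * X ^ m with hQ
  have hM' : ∀ s ∈ Set.Icc y₀ (y₀ + r), |iteratedDeriv d v s| ≤ M := by
    intro s hs
    have : s - y₀ ∈ Set.Icc (0 : ℝ) r := ⟨by linarith [hs.1], by linarith [hs.2]⟩
    simpa using hM (s - y₀) this
  have hQdeg : Q.degree < (d : ℕ) := by
    rw [hQ]
    refine lt_of_le_of_lt (Polynomial.degree_sum_le _ _) ?_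
    rw [Finset.sup_lt_iff (by exact_mod_cast WithBot.bot_lt_coe d)]
    intro m hm
    exact lt_of_le_of_lt (Polynomial.degree_C_mul_X_pow_le _ _)
      (by exact_mod_cast Finset.mem_range.mp hm)
  have hQcoeff : ∀ m, m < d → Q.coeff m = c m * r ^ m := by
    intro m hm
    rw [hQ, Polynomial.finset_sum_coeff]
    rw [Finset.sum_congr rfl fun k _ => by
      rw [Polynomial.coeff_C_mul, Polynomial.coeff_X_pow]]
    simp [Finset.sum_ite_eq', hm]
  have hnode : ∀ k ∈ Finset.range d, |Q.eval ((k : ℝ) / d)| ≤ A + M * r ^ d := by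
    intro k hk
    have hkd : (0 : ℝ) ≤ (k : ℝ) / d := by positivity
    have hkd1 : (k : ℝ) / d ≤ 1 := by
      rw [div_le_one (by exact_mod_cast hd)]
      exact_mod_cast (Finset.mem_range.mp hk).le
    set s : ℝ := r * ((k : ℝ) / d) with hs
    have hsmem : s ∈ Set.Icc (0 : ℝ) r := by
      constructor
      · positivity
      · calc s ≤ r * 1 := mul_le_mul_of_nonneg_left hkd1 hr.le
          _ = r := mul_one r
    have heval : Q.eval ((k : ℝ) / d) = ∑ m ∈ Finset.range d, c m * s ^ m := by
      rw [hQ]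
      rw [Polynomial.eval_finset_sum]
      refine Finset.sum_congr rfl fun m _ => ?_
      simp [hs, mul_pow]; ring
    have hrem := taylor_bound hv hd hdN hr hM'
      (x := y₀ + s) ⟨by linarith [hsmem.1], by linarith [hsmem.2]⟩
    have : |v (y₀ + s) - ∑ m ∈ Finset.range d, c m * s ^ m| ≤ M * r ^ d := by
      simpa [hc] using hrem
    have hvs : |v (y₀ + s)| ≤ A := hA s hsmem
    rw [heval]
    calc |∑ m ∈ Finset.range d, c m * s ^ m|
        = |v (y₀ + s) - (v (y₀ + s) - ∑ m ∈ Finset.range d, c m * s ^ m)| := by congr 1; ring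
      _ ≤ |v (y₀ + s)| + |v (y₀ + s) - ∑ m ∈ Finset.range d, c m * s ^ m| := abs_sub _ _
      _ ≤ A + M * r ^ d := add_le_add hvs this
  have hcb := hP Q hQdeg (A + M * r ^ d) hnode j
  rw [hQcoeff j hj] at hcb
  have hrj : (0 : ℝ) < r ^ j := pow_pos hr j
  have hcj : |c j| ≤ K₀ * (A + M * r ^ d) / r ^ j := by
    rw [le_div_iff₀ hrj]
    calc |c j| * r ^ j = |c j * r ^ j| := by rw [abs_mul, abs_of_pos hrj]
      _ ≤ K₀ * (A + M * r ^ d) := hcb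
  have hitereq : iteratedDeriv j v y₀ = c j * (j.factorial : ℝ) := by
    rw [hc]
    have : (j.factorial : ℝ) ≠ 0 := by positivity
    field_simp
  rw [hitereq, abs_mul, abs_of_pos (show (0 : ℝ) < (j.factorial : ℝ) by positivity)]
  calc |c j| * (j.factorial : ℝ) ≤ (K₀ * (A + M * r ^ d) / r ^ j) * (d.factorial : ℝ) :=
        mul_le_mul hcj (by exact_mod_cast Nat.factorial_le hj.le) (by positivity)
          (by positivity)
    _ = (d.factorial : ℝ) * K₀ * (A + M * r ^ d) / r ^ j := by ring

private lemma bridgeDir {g : ℝ × ℝ → ℝ} {N : ℕ} (hg : ContDiff ℝ (N : ℕ∞) g)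
    (c w : ℝ × ℝ) : ∀ m : ℕ, m ≤ N → ∀ t : ℝ,
    iteratedDeriv m (fun s => g (c + s • w)) t
      = iteratedFDeriv ℝ m g (c + t • w) (fun _ => w) := by
  intro m
  induction m with
  | zero => intro _ t; simp [iteratedDeriv_zero]
  | succ m IH =>
    intro hm t
    have hm' : m ≤ N := le_trans (Nat.le_succ m) hm
    rw [iteratedDeriv_succ]
    have hIH : (iteratedDeriv m (fun s => g (c + s • w)))
        = fun t => iteratedFDeriv ℝ m g (c + t • w) (fun _ => w) := funext (IH hm')
    rw [hIH]
    have hdiff : Differentiable ℝ (iteratedFDeriv ℝ m g) := by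
      have : ContDiff ℝ (1 : ℕ∞) (iteratedFDeriv ℝ m g) := by
        apply hg.iteratedFDeriv_right
        rw [add_comm]; exact_mod_cast hm
      exact this.differentiable (by norm_num)
    have hΦ : HasFDerivAt (iteratedFDeriv ℝ m g)
        (fderiv ℝ (iteratedFDeriv ℝ m g) (c + t • w)) (c + t • w) :=
      (hdiff _).hasFDerivAt
    have hline : HasDerivAt (fun s : ℝ => c + s • w) w t := by
      simpa using ((hasDerivAt_id t).smul_const w).const_add c
    have hcomp := hΦ.comp_hasDerivAt t hline
    have happ' := (ContinuousMultilinearMap.apply ℝ (fun _ : Fin m => ℝ × ℝ) ℝ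
      (fun _ => w)).hasFDerivAt.comp_hasDerivAt t hcomp
    have happ : HasDerivAt (fun t => (iteratedFDeriv ℝ m g (c + t • w)) fun _ => w)
        ((ContinuousMultilinearMap.apply ℝ (fun _ : Fin m => ℝ × ℝ) ℝ fun _ => w)
          ((fderiv ℝ (iteratedFDeriv ℝ m g) (c + t • w)) w)) t := happ'
    rw [happ.deriv]
    rw [iteratedFDeriv_succ_apply_left]
    rfl

set_option maxHeartbeats 2000000 in
theorem stmt_14 (ℓ : ℕ) (hℓ : 0 < ℓ) (ρ C : ℝ) (hρ : 0 < ρ) (hC : 0 < C)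
    (h : ℝ → ℝ → ℝ)
    (hsmooth : ContDiff ℝ ((10 * ℓ + 1 : ℕ) : ℕ∞) (Function.uncurry h))
    (h0 : ∀ t₁ ∈ Set.Ioo (-ρ) ρ, h t₁ 0 = 0)
    (hbound : ∀ t₁ ∈ Set.Ioo (-ρ) ρ, ∀ t₃ ∈ Set.Ioo (-ρ) ρ,
      |h t₁ t₃| ≤ C * (|t₁| ^ (10 * ℓ) + |t₃| ^ (10 * ℓ))) :
    ∃ C' > 0, ∀ i j : ℕ, i + j ≤ ℓ →
      ∀ t₁ ∈ Set.Ioo (-ρ) ρ, ∀ t₃ ∈ Set.Ioo (-ρ) ρ, (t₁ = 0 ∨ t₃ = 0) →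
        |iteratedDeriv i (fun x => iteratedDeriv j (h x) t₃) t₁| ≤
          C' * (|t₁| + |t₃|) ^ (ℓ + 1) := by
  classical
  set n := 10 * ℓ with hn
  set f : ℝ × ℝ → ℝ := Function.uncurry h with hfdef
  have hsm : ContDiff ℝ ((n + 1 : ℕ) : ℕ∞) f := hsmooth
  set e₁ : ℝ × ℝ := (1, 0) with he₁
  set e₂ : ℝ × ℝ := (0, 1) with he₂
  set Fj : ℕ → ℝ × ℝ → ℝ := fun j z => iteratedFDeriv ℝ j f z (fun _ => e₂) with hFjdef
  -- inner bridge
  have hinner : ∀ j ≤ n + 1, ∀ x y : ℝ, iteratedDeriv j (h x) y = Fj j (x, y) := by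
    intro j hj x y
    have hfe : (fun s : ℝ => f ((x, (0 : ℝ)) + s • e₂)) = h x := by
      funext s
      simp [hfdef, he₂, Function.uncurry, Prod.smul_mk, Prod.mk_add_mk]
    have := bridgeDir hsm (x, (0 : ℝ)) e₂ j hj y
    rw [hfe] at this
    rw [this]
    have hpt : (x, (0 : ℝ)) + y • e₂ = (x, y) := by
      simp [he₂, Prod.smul_mk, Prod.mk_add_mk]
    rw [hpt]
  -- smoothness of Fj
  have hFs : ∀ j ≤ n + 1, ContDiff ℝ ((n + 1 - j : ℕ) : ℕ∞) (Fj j) := by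
    intro j hj
    exact (ContinuousMultilinearMap.apply ℝ (fun _ : Fin j => ℝ × ℝ) ℝ
      (fun _ => e₂)).contDiff.comp
      (hsm.iteratedFDeriv_right (by exact_mod_cast (Nat.sub_add_cancel hj).le))
  -- compact region and membership
  set Kc : Set (ℝ × ℝ) := Set.Icc ((-ρ, -ρ) : ℝ × ℝ) (ρ, ρ) with hKcdef
  have hKc : IsCompact Kc := isCompact_Icc
  have hmem : ∀ x y : ℝ, |x| ≤ ρ → |y| ≤ ρ → (x, y) ∈ Kc := by
    intro x y hx hy
    rw [abs_le] at hx hy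
    exact ⟨⟨hx.1, hy.1⟩, ⟨hx.2, hy.2⟩⟩
  have powdiv : ∀ (a r : ℝ) (p q : ℕ), 0 < r → q ≤ p → a * r ^ p / r ^ q = a * r ^ (p - q) := by
    intro a r p q hr hq
    have hpq : r ^ p = r ^ (p - q) * r ^ q := by rw [← pow_add, Nat.sub_add_cancel hq]
    rw [hpq, ← mul_assoc, mul_div_assoc, div_self (pow_ne_zero q hr.ne'), mul_one]
  have key : ∀ i j : ℕ, i + j ≤ ℓ → ∃ K, 0 < K ∧ ∀ t₁ ∈ Set.Ioo (-ρ) ρ, ∀ t₃ ∈ Set.Ioo (-ρ) ρ,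
      |iteratedDeriv i (fun x => iteratedDeriv j (h x) t₃) t₁| ≤ K * (|t₁| + |t₃|) ^ (ℓ + 1) := by
    intro i j hij
    have hjn1 : j ≤ n + 1 := by omega
    have hjn : j ≤ n := by omega
    have hFsj := hFs j hjn1
    set d : ℕ := ℓ + 2 + i with hd
    have hd0 : 0 < d := by omega
    have hdnj : d ≤ n + 1 - j := by rw [hd, hn]; omega
    have hout : ∀ m, m ≤ n + 1 - j → ∀ a b : ℝ,
        iteratedDeriv m (fun x => Fj j (x, b)) a
          = iteratedFDeriv ℝ m (Fj j) (a, b) (fun _ => e₁) := by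
      intro m hm a b
      have hfe : (fun s : ℝ => Fj j (((0 : ℝ), b) + s • e₁)) = fun x => Fj j (x, b) := by
        funext s; simp [he₁, Prod.smul_mk, Prod.mk_add_mk]
      have hB := bridgeDir hFsj ((0 : ℝ), b) e₁ m hm a
      rw [hfe] at hB
      rw [hB]
      congr 1
      simp [he₁, Prod.smul_mk, Prod.mk_add_mk]
    have hvb : ∀ b : ℝ, ContDiff ℝ ((n + 1 - j : ℕ) : ℕ∞) (fun x => Fj j (x, b)) :=
      fun b => hFsj.comp (contDiff_id.prodMk contDiff_const)
    have hsup : ∀ G : ℝ × ℝ → ℝ, Continuous G → ∃ M, 0 ≤ M ∧ ∀ z ∈ Kc, |G z| ≤ M := by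
      intro G hG
      obtain ⟨M₀, hM₀⟩ := hKc.exists_bound_of_continuousOn hG.continuousOn
      exact ⟨max M₀ 0, le_max_right _ _, fun z hz => le_trans (hM₀ z hz) (le_max_left _ _)⟩
    have hFncont : Continuous (Fj n) := by
      have : Continuous fun z => (ContinuousMultilinearMap.apply ℝ (fun _ : Fin n => ℝ × ℝ) ℝ
          (fun _ => e₂)) (iteratedFDeriv ℝ n f z) :=
        (ContinuousMultilinearMap.apply ℝ (fun _ : Fin n => ℝ × ℝ) ℝ (fun _ => e₂)).continuous.comp
          (hsm.continuous_iteratedFDeriv (by exact_mod_cast Nat.le_succ n))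
      exact this
    obtain ⟨Mn, hMn0, hMn⟩ := hsup (Fj n) hFncont
    -- Step A': anisotropic flatness bound for Fj j
    obtain ⟨Kc₁, hKc₁, hcore₁⟩ := core n (by omega)
    set K₂ : ℝ := Kc₁ * (C * (1 + 2 ^ n) + Mn) with hK₂
    have hK₂pos : 0 < K₂ := by positivity
    have hA' : ∀ x y : ℝ, |x| < ρ / 2 → |y| < ρ / 4 → |Fj j (x, y)| ≤ K₂ * (|x| + |y|) ^ (n - j) := by
      intro x y hx hy
      have hvx : ContDiff ℝ ((n + 1 : ℕ) : ℕ∞) (h x) := by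
        have : (h x) = fun y' => f (x, y') := by funext y'; simp [hfdef, Function.uncurry]
        rw [this]
        exact hsm.comp (contDiff_const.prodMk contDiff_id)
      have hnj1 : 1 ≤ n - j := by rw [hn]; omega
      have hn0 : n ≠ 0 := by rw [hn]; omega
      rcases eq_or_lt_of_le (abs_nonneg x |>.trans (le_add_of_nonneg_right (abs_nonneg y)) :
          (0 : ℝ) ≤ |x| + |y|) with hr0 | hrpos
      · -- x = 0, y = 0
        have habs0 : |x| = 0 ∧ |y| = 0 := by
          constructor <;> [skip; skip] <;>
            · have h1 := abs_nonneg x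
              have h2 := abs_nonneg y
              linarith
        have hx0 : x = 0 := abs_eq_zero.mp habs0.1
        have hy0 : y = 0 := abs_eq_zero.mp habs0.2
        subst hx0; subst hy0
        have hval : ∀ r ∈ Set.Ioo (0 : ℝ) ρ, |Fj j (0, 0)| ≤ Kc₁ * (C + Mn) * r ^ (n - j) := by
          intro r hr
          have hAr : ∀ s ∈ Set.Icc (0 : ℝ) r, |h 0 ((0 : ℝ) + s)| ≤ C * r ^ n := by
            intro s hs
            have hsIoo : (0 : ℝ) + s ∈ Set.Ioo (-ρ) ρ :=
              ⟨by linarith [hs.1], by linarith [hs.2, hr.2]⟩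
            have hb := hbound 0 ⟨by linarith, hρ⟩ ((0 : ℝ) + s) hsIoo
            have habs : |(0 : ℝ) + s| = s := by rw [zero_add, abs_of_nonneg hs.1]
            rw [habs, abs_zero, zero_pow hn0] at hb
            have hsn : s ^ n ≤ r ^ n := pow_le_pow_left₀ hs.1 hs.2 n
            calc |h 0 ((0 : ℝ) + s)| ≤ C * (0 + s ^ n) := hb
              _ = C * s ^ n := by ring
              _ ≤ C * r ^ n := mul_le_mul_of_nonneg_left hsn hC.le
          have hMr : ∀ s ∈ Set.Icc (0 : ℝ) r, |iteratedDeriv n (h 0) ((0 : ℝ) + s)| ≤ Mn := by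
            intro s hs
            rw [hinner n (Nat.le_succ n) 0 ((0 : ℝ) + s)]
            refine hMn _ (hmem 0 ((0 : ℝ) + s) (by rw [abs_zero]; linarith) ?_)
            rw [zero_add, abs_of_nonneg hs.1]; linarith [hs.2, hr.2]
          have hcb := hcore₁ (h 0) (n + 1) hvx (Nat.le_succ n) 0 r (C * r ^ n) Mn hr.1 hAr hMr j
            (by omega)
          rw [hinner j hjn1 0 0] at hcb
          calc |Fj j (0, 0)| ≤ Kc₁ * (C * r ^ n + Mn * r ^ n) / r ^ j := hcb
            _ = Kc₁ * (C + Mn) * r ^ n / r ^ j := by ring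
            _ = Kc₁ * (C + Mn) * r ^ (n - j) := powdiv _ r n j hr.1 hjn
        have hlim : Filter.Tendsto (fun r : ℝ => Kc₁ * (C + Mn) * r ^ (n - j))
            (nhdsWithin 0 (Set.Ioi 0)) (nhds 0) := by
          have h1 : Filter.Tendsto (fun r : ℝ => r ^ (n - j)) (nhds 0) (nhds 0) := by
            simpa [zero_pow (show n - j ≠ 0 by omega)] using
              (continuous_pow (n - j)).tendsto (0 : ℝ)
          have h2 := h1.const_mul (Kc₁ * (C + Mn))
          rw [mul_zero] at h2
          exact h2.mono_left nhdsWithin_le_nhds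
        have hev : ∀ᶠ r in nhdsWithin (0 : ℝ) (Set.Ioi 0),
            |Fj j (0, 0)| ≤ Kc₁ * (C + Mn) * r ^ (n - j) := by
          filter_upwards [Ioo_mem_nhdsGT_of_mem (Set.mem_Ico.mpr ⟨le_refl (0 : ℝ), hρ⟩)] with r hr
          exact hval r hr
        have hle0 : |Fj j (0, 0)| ≤ 0 := ge_of_tendsto hlim hev
        have hz : (|(0 : ℝ)| + |(0 : ℝ)|) ^ (n - j) = 0 := by
          rw [abs_zero, add_zero, zero_pow (show n - j ≠ 0 by omega)]
        rw [hz, mul_zero]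
        exact hle0
      · -- positive radius
        set r : ℝ := |x| + |y| with hrdef
        have hAr : ∀ s ∈ Set.Icc (0 : ℝ) r, |h x (y + s)| ≤ C * (|x| ^ n + (|x| + 2 * |y|) ^ n) := by
          intro s hs
          have hys : |y + s| ≤ |x| + 2 * |y| := by
            have := abs_add_le y s
            have : |y + s| ≤ |y| + s := by
              refine le_trans (abs_add_le y s) ?_
              simp [abs_of_nonneg hs.1]
            linarith [hs.2]
          have hyIoo : y + s ∈ Set.Ioo (-ρ) ρ := by
            have : |y + s| < ρ := by
              refine lt_of_le_of_lt hys ?_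
              linarith
            exact Set.mem_Ioo.mpr (abs_lt.mp this)
          have hxIoo : x ∈ Set.Ioo (-ρ) ρ := Set.mem_Ioo.mpr (abs_lt.mp (by linarith : |x| < ρ))
          refine le_trans (hbound x hxIoo (y + s) hyIoo) ?_
          refine mul_le_mul_of_nonneg_left ?_ hC.le
          have := pow_le_pow_left₀ (abs_nonneg (y + s)) hys n
          linarith
        have hMr : ∀ s ∈ Set.Icc (0 : ℝ) r, |iteratedDeriv n (h x) (y + s)| ≤ Mn := by
          intro s hs
          rw [hinner n (Nat.le_succ n) x (y + s)]
          refine hMn _ (hmem _ _ (by linarith) ?_)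
          have : |y + s| ≤ |y| + s := le_trans (abs_add_le y s) (by simp [abs_of_nonneg hs.1])
          have hsr : s ≤ r := hs.2
          have : |y + s| ≤ |x| + 2 * |y| := by linarith
          linarith
        have hcb := hcore₁ (h x) (n + 1) hvx (Nat.le_succ n) y r _ Mn hrpos hAr hMr j (by omega)
        rw [hinner j hjn1 x y] at hcb
        refine le_trans hcb ?_
        have hb1 : |x| ^ n ≤ r ^ n := pow_le_pow_left₀ (abs_nonneg x) (by rw [hrdef]; linarith [abs_nonneg y]) n
        have hb2 : (|x| + 2 * |y|) ^ n ≤ 2 ^ n * r ^ n := by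
          calc (|x| + 2 * |y|) ^ n ≤ (2 * r) ^ n := by
                refine pow_le_pow_left₀ (by positivity) ?_ n
                rw [hrdef]; linarith [abs_nonneg x]
            _ = 2 ^ n * r ^ n := mul_pow 2 r n
        have hnum : C * (|x| ^ n + (|x| + 2 * |y|) ^ n) + Mn * r ^ n
            ≤ (C * (1 + 2 ^ n) + Mn) * r ^ n := by nlinarith [hC.le, hMn0]
        calc Kc₁ * (C * (|x| ^ n + (|x| + 2 * |y|) ^ n) + Mn * r ^ n) / r ^ j
            ≤ Kc₁ * ((C * (1 + 2 ^ n) + Mn) * r ^ n) / r ^ j := by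
              refine (div_le_div_iff_of_pos_right (pow_pos hrpos j)).mpr ?_
              exact mul_le_mul_of_nonneg_left hnum hKc₁.le
          _ = K₂ * r ^ n / r ^ j := by rw [hK₂]; ring
          _ = K₂ * r ^ (n - j) := powdiv K₂ r n j hrpos hjn
    -- near bound
    obtain ⟨Kc₂, hKc₂, hcore₂⟩ := core d hd0
    have hGdcont : Continuous (fun z => iteratedFDeriv ℝ d (Fj j) z (fun _ => e₁)) := by
      have : Continuous fun z => (ContinuousMultilinearMap.apply ℝ (fun _ : Fin d => ℝ × ℝ) ℝ
          (fun _ => e₁)) (iteratedFDeriv ℝ d (Fj j) z) :=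
        (ContinuousMultilinearMap.apply ℝ (fun _ : Fin d => ℝ × ℝ) ℝ (fun _ => e₁)).continuous.comp
          (hFsj.continuous_iteratedFDeriv (by exact_mod_cast hdnj))
      exact this
    obtain ⟨Md, hMd0, hMd⟩ := hsup _ hGdcont
    have hinj : i ≤ n + 1 - j := by rw [hn]; omega
    have hGicont : Continuous (fun z => iteratedFDeriv ℝ i (Fj j) z (fun _ => e₁)) := by
      have : Continuous fun z => (ContinuousMultilinearMap.apply ℝ (fun _ : Fin i => ℝ × ℝ) ℝ
          (fun _ => e₁)) (iteratedFDeriv ℝ i (Fj j) z) :=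
        (ContinuousMultilinearMap.apply ℝ (fun _ : Fin i => ℝ × ℝ) ℝ (fun _ => e₁)).continuous.comp
          (hFsj.continuous_iteratedFDeriv (by exact_mod_cast hinj))
      exact this
    obtain ⟨Mi, hMi0, hMi⟩ := hsup _ hGicont
    have hid : i ≤ d := by omega
    have hinjn : i ≤ n - j := by rw [hn]; omega
    have hdi : d - i = ℓ + 2 := by omega
    have he1 : ℓ + 1 ≤ n - j - i := by rw [hn]; omega
    have he2 : n - j - i ≤ n := by omega
    set K₃ : ℝ := Kc₂ * K₂ * 2 ^ (n - j) * (1 + ρ) ^ n + Kc₂ * Md * (1 + ρ) ^ n with hK₃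
    have hK₃pos : 0 < K₃ := by
      have h1 : 0 < Kc₂ * K₂ * 2 ^ (n - j) * (1 + ρ) ^ n := by positivity
      have h2 : 0 ≤ Kc₂ * Md * (1 + ρ) ^ n := by positivity
      rw [hK₃]; linarith
    have hnear : ∀ a b : ℝ, |a| < ρ / 8 → |b| < ρ / 8 →
        |iteratedDeriv i (fun x => Fj j (x, b)) a| ≤ K₃ * (|a| + |b|) ^ (ℓ + 1) := by
      intro a b ha hb
      rcases eq_or_lt_of_le (abs_nonneg a |>.trans (le_add_of_nonneg_right (abs_nonneg b)) :
          (0 : ℝ) ≤ |a| + |b|) with hr0 | hrpos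
      · -- a = b = 0
        have habs0 : |a| = 0 ∧ |b| = 0 := by
          constructor <;>
            · have h1 := abs_nonneg a
              have h2 := abs_nonneg b
              linarith
        have ha0 : a = 0 := abs_eq_zero.mp habs0.1
        have hb0 : b = 0 := abs_eq_zero.mp habs0.2
        subst ha0; subst hb0
        have hval : ∀ r ∈ Set.Ioo (0 : ℝ) (ρ / 8),
            |iteratedDeriv i (fun x => Fj j (x, (0 : ℝ))) 0|
              ≤ Kc₂ * K₂ * r ^ (n - j - i) + Kc₂ * Md * r ^ (d - i) := by
          intro r hr
          have hAr : ∀ s ∈ Set.Icc (0 : ℝ) r, |(fun x => Fj j (x, (0 : ℝ))) ((0 : ℝ) + s)|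
              ≤ K₂ * r ^ (n - j) := by
            intro s hs
            have hs' : |(0 : ℝ) + s| = s := by rw [zero_add, abs_of_nonneg hs.1]
            have hA := hA' ((0 : ℝ) + s) 0 (by rw [hs']; linarith [hr.2, hs.2])
              (by rw [abs_zero]; linarith)
            rw [hs', abs_zero, add_zero] at hA
            refine le_trans hA (mul_le_mul_of_nonneg_left ?_ hK₂pos.le)
            exact pow_le_pow_left₀ hs.1 hs.2 _
          have hMr : ∀ s ∈ Set.Icc (0 : ℝ) r,
              |iteratedDeriv d (fun x => Fj j (x, (0 : ℝ))) ((0 : ℝ) + s)| ≤ Md := by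
            intro s hs
            rw [hout d hdnj ((0 : ℝ) + s) 0]
            refine hMd _ (hmem _ _ ?_ (by rw [abs_zero]; linarith))
            rw [zero_add, abs_of_nonneg hs.1]; linarith [hr.2, hs.2]
          have hcb := hcore₂ (fun x => Fj j (x, (0 : ℝ))) (n + 1 - j) (hvb 0) hdnj 0 r
            (K₂ * r ^ (n - j)) Md hr.1 hAr hMr i (by omega)
          refine le_trans hcb ?_
          rw [show Kc₂ * (K₂ * r ^ (n - j) + Md * r ^ d)
              = Kc₂ * K₂ * r ^ (n - j) + Kc₂ * Md * r ^ d from by ring, add_div,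
            powdiv _ r (n - j) i hr.1 hinjn, powdiv _ r d i hr.1 hid]
        have hlim : Filter.Tendsto
            (fun r : ℝ => Kc₂ * K₂ * r ^ (n - j - i) + Kc₂ * Md * r ^ (d - i))
            (nhdsWithin 0 (Set.Ioi 0)) (nhds 0) := by
          have h1 : Filter.Tendsto (fun r : ℝ => r ^ (n - j - i)) (nhds 0) (nhds 0) := by
            simpa [zero_pow (show n - j - i ≠ 0 by omega)] using
              (continuous_pow (n - j - i)).tendsto (0 : ℝ)
          have h2 : Filter.Tendsto (fun r : ℝ => r ^ (d - i)) (nhds 0) (nhds 0) := by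
            simpa [zero_pow (show d - i ≠ 0 by omega)] using
              (continuous_pow (d - i)).tendsto (0 : ℝ)
          have h3 := (h1.const_mul (Kc₂ * K₂)).add (h2.const_mul (Kc₂ * Md))
          rw [mul_zero, mul_zero, add_zero] at h3
          exact h3.mono_left nhdsWithin_le_nhds
        have hev : ∀ᶠ r in nhdsWithin (0 : ℝ) (Set.Ioi 0),
            |iteratedDeriv i (fun x => Fj j (x, (0 : ℝ))) 0|
              ≤ Kc₂ * K₂ * r ^ (n - j - i) + Kc₂ * Md * r ^ (d - i) := by
          filter_upwards [Ioo_mem_nhdsGT_of_mem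
            (Set.mem_Ico.mpr ⟨le_refl (0 : ℝ), show (0 : ℝ) < ρ / 8 by linarith⟩)] with r hr
          exact hval r hr
        have hle0 := ge_of_tendsto hlim hev
        have hz : (|(0 : ℝ)| + |(0 : ℝ)|) ^ (ℓ + 1) = 0 := by
          rw [abs_zero, add_zero, zero_pow (Nat.succ_ne_zero ℓ)]
        rw [hz, mul_zero]
        exact hle0
      · -- positive radius
        set r : ℝ := |a| + |b| with hrdef
        have hAr : ∀ s ∈ Set.Icc (0 : ℝ) r, |(fun x => Fj j (x, b)) (a + s)|
            ≤ K₂ * 2 ^ (n - j) * r ^ (n - j) := by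
          intro s hs
          have has : |a + s| ≤ |a| + s := le_trans (abs_add_le a s) (by simp [abs_of_nonneg hs.1])
          have hasr : |a + s| + |b| ≤ 2 * r := by
            have : s ≤ r := hs.2
            rw [hrdef]; rw [hrdef] at this; linarith
          have hA := hA' (a + s) b (by
              have : s ≤ r := hs.2
              rw [hrdef] at this
              have : |a + s| ≤ |a| + r := by rw [hrdef]; linarith
              rw [hrdef] at this
              linarith) (by linarith)
          refine le_trans hA ?_
          calc K₂ * (|a + s| + |b|) ^ (n - j) ≤ K₂ * (2 * r) ^ (n - j) :=
                mul_le_mul_of_nonneg_left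
                  (pow_le_pow_left₀ (by positivity) hasr _) hK₂pos.le
            _ = K₂ * 2 ^ (n - j) * r ^ (n - j) := by rw [mul_pow]; ring
        have hMr : ∀ s ∈ Set.Icc (0 : ℝ) r,
            |iteratedDeriv d (fun x => Fj j (x, b)) (a + s)| ≤ Md := by
          intro s hs
          rw [hout d hdnj (a + s) b]
          refine hMd _ (hmem _ _ ?_ (by linarith))
          have : |a + s| ≤ |a| + s := le_trans (abs_add_le a s) (by simp [abs_of_nonneg hs.1])
          have hsr : s ≤ r := hs.2
          rw [hrdef] at hsr
          linarith
        have hcb := hcore₂ (fun x => Fj j (x, b)) (n + 1 - j) (hvb b) hdnj a r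
          (K₂ * 2 ^ (n - j) * r ^ (n - j)) Md hrpos hAr hMr i (by omega)
        refine le_trans hcb ?_
        rw [show Kc₂ * (K₂ * 2 ^ (n - j) * r ^ (n - j) + Md * r ^ d)
            = Kc₂ * K₂ * 2 ^ (n - j) * r ^ (n - j) + Kc₂ * Md * r ^ d from by ring, add_div,
          powdiv _ r (n - j) i hrpos hinjn, powdiv _ r d i hrpos hid]
        have hrle : r ≤ 1 + ρ := by rw [hrdef]; linarith
        have hrp : ∀ e : ℕ, ℓ + 1 ≤ e → e ≤ n → r ^ e ≤ (1 + ρ) ^ n * r ^ (ℓ + 1) := by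
          intro e h1 h2
          rw [show r ^ e = r ^ (e - (ℓ + 1)) * r ^ (ℓ + 1) from by
            rw [← pow_add, Nat.sub_add_cancel h1]]
          refine mul_le_mul_of_nonneg_right ?_ (by positivity)
          calc r ^ (e - (ℓ + 1)) ≤ (1 + ρ) ^ (e - (ℓ + 1)) :=
                pow_le_pow_left₀ (by positivity) hrle _
            _ ≤ (1 + ρ) ^ n := pow_le_pow_right₀ (by linarith) (by omega)
        have t1 := hrp (n - j - i) he1 he2
        have t2 := hrp (d - i) (by omega) (by rw [hdi, hn]; omega)
        have a1 : Kc₂ * K₂ * 2 ^ (n - j) * r ^ (n - j - i)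
            ≤ Kc₂ * K₂ * 2 ^ (n - j) * ((1 + ρ) ^ n * r ^ (ℓ + 1)) :=
          mul_le_mul_of_nonneg_left t1 (by positivity)
        have a2 : Kc₂ * Md * r ^ (d - i) ≤ Kc₂ * Md * ((1 + ρ) ^ n * r ^ (ℓ + 1)) :=
          mul_le_mul_of_nonneg_left t2 (by positivity)
        have hKeq : K₃ * r ^ (ℓ + 1) = Kc₂ * K₂ * 2 ^ (n - j) * ((1 + ρ) ^ n * r ^ (ℓ + 1))
            + Kc₂ * Md * ((1 + ρ) ^ n * r ^ (ℓ + 1)) := by rw [hK₃]; ring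
        linarith
    -- far bound
    have hfar : ∀ a b : ℝ, |a| ≤ ρ → |b| ≤ ρ → ρ / 8 ≤ |a| + |b| →
        |iteratedDeriv i (fun x => Fj j (x, b)) a|
          ≤ Mi / (ρ / 8) ^ (ℓ + 1) * (|a| + |b|) ^ (ℓ + 1) := by
      intro a b ha hb hab
      rw [hout i hinj a b]
      have h1 : |iteratedFDeriv ℝ i (Fj j) (a, b) fun _ => e₁| ≤ Mi := hMi _ (hmem a b ha hb)
      have h2 : (ρ / 8) ^ (ℓ + 1) ≤ (|a| + |b|) ^ (ℓ + 1) :=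
        pow_le_pow_left₀ (by positivity) hab _
      calc |iteratedFDeriv ℝ i (Fj j) (a, b) fun _ => e₁| ≤ Mi := h1
        _ = Mi / (ρ / 8) ^ (ℓ + 1) * (ρ / 8) ^ (ℓ + 1) := by field_simp
        _ ≤ Mi / (ρ / 8) ^ (ℓ + 1) * (|a| + |b|) ^ (ℓ + 1) :=
            mul_le_mul_of_nonneg_left h2 (by positivity)
    -- combine near and far
    refine ⟨K₃ + Mi / (ρ / 8) ^ (ℓ + 1), ?_, ?_⟩
    · have : 0 ≤ Mi / (ρ / 8) ^ (ℓ + 1) := by positivity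
      linarith
    intro t₁ ht₁ t₃ ht₃
    have hrw : (fun x => iteratedDeriv j (h x) t₃) = fun x => Fj j (x, t₃) := by
      funext x; exact hinner j hjn1 x t₃
    rw [hrw]
    have hX : (0 : ℝ) ≤ (|t₁| + |t₃|) ^ (ℓ + 1) := by positivity
    have hMiK : 0 ≤ Mi / (ρ / 8) ^ (ℓ + 1) := by positivity
    have ht₁' : |t₁| < ρ := abs_lt.mpr (Set.mem_Ioo.mp ht₁)
    have ht₃' : |t₃| < ρ := abs_lt.mpr (Set.mem_Ioo.mp ht₃)
    rcases lt_or_ge (|t₁|) (ρ / 8) with h1 | h1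
    · rcases lt_or_ge (|t₃|) (ρ / 8) with h2 | h2
      · refine le_trans (hnear t₁ t₃ h1 h2) ?_
        exact mul_le_mul_of_nonneg_right (by linarith) hX
      · refine le_trans (hfar t₁ t₃ ht₁'.le ht₃'.le (by linarith [abs_nonneg t₁])) ?_
        exact mul_le_mul_of_nonneg_right (by linarith) hX
    · refine le_trans (hfar t₁ t₃ ht₁'.le ht₃'.le (by linarith [abs_nonneg t₃])) ?_
      exact mul_le_mul_of_nonneg_right (by linarith) hX
  -- combine constants
  set KK : ℕ → ℕ → ℝ := fun i j => if hc : i + j ≤ ℓ then (key i j hc).choose else 1 with hKK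
  have hKKpos : ∀ i j, 0 < KK i j := by
    intro i j
    rw [hKK]
    dsimp only
    split
    · exact (key i j ‹_›).choose_spec.1
    · norm_num
  set C' : ℝ := ∑ p ∈ Finset.range (ℓ + 1) ×ˢ Finset.range (ℓ + 1), KK p.1 p.2 with hC'
  have hC'pos : 0 < C' := by
    apply Finset.sum_pos (fun p _ => hKKpos p.1 p.2)
    exact ⟨(0, 0), by simp [Nat.succ_pos]⟩
  refine ⟨C', hC'pos, ?_⟩
  intro i j hij t₁ ht₁ t₃ ht₃ _
  have hKKij : KK i j = (key i j hij).choose := by rw [hKK]; simp [hij]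
  have hb := (key i j hij).choose_spec.2 t₁ ht₁ t₃ ht₃
  refine le_trans hb ?_
  have hle : (key i j hij).choose ≤ C' := by
    rw [← hKKij, hC']
    refine Finset.single_le_sum (f := fun p : ℕ × ℕ => KK p.1 p.2)
      (fun p _ => (hKKpos p.1 p.2).le) ?_ (a := (i, j))
    simp [Finset.mem_product, Finset.mem_range]
    omega
  exact mul_le_mul_of_nonneg_right hle (by positivity)
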